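/- Let α > 1. There exist constants c, C > 0 depending only on α such that for every a : ℤ² → ℂ with a(0) = 0 one has, with all quantities valued in [0,∞]: c·∑_{m∈ℤ²∖{0}} |m|^{−2(α+1)}|a(m)|² ≤ ∑_{k∈ℤ²∖{0}} |k|^{−2α} ( ∑_{ℓ∈ℤ²∖{0}, ℓ≠k} |ℓ|^{−2(α+1)} (1 − |k|²/|ℓ−k|²)² |a(ℓ−k)|² ) ≤ C·∑_{m∈ℤ²∖{0}} |m|^{−2(α+1)}|a(m)|². -/

import Mathlib

open scoped ENNReal

/-- Squared Euclidean norm of a lattice point `k ∈ ℤ²`. -/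
noncomputable def nsq (k : ℤ × ℤ) : ℝ := (k.1 : ℝ) ^ 2 + (k.2 : ℝ) ^ 2

lemma nsq_nonneg (m : ℤ × ℤ) : 0 ≤ nsq m := by unfold nsq; positivity

lemma nsq_eq_intCast (m : ℤ × ℤ) : nsq m = ((m.1 ^ 2 + m.2 ^ 2 : ℤ) : ℝ) := by
  unfold nsq; push_cast; ring

lemma one_le_nsq {m : ℤ × ℤ} (hm : m ≠ 0) : 1 ≤ nsq m := by
  rw [nsq_eq_intCast]
  have h : m.1 ≠ 0 ∨ m.2 ≠ 0 := by
    by_contra h; push_neg at h; exact hm (Prod.ext h.1 h.2)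
  have h2 : (1 : ℤ) ≤ m.1 ^ 2 + m.2 ^ 2 := by
    rcases h with h | h
    · have := pow_two_pos_of_ne_zero h (a := m.1)
      nlinarith [sq_nonneg m.2]
    · have := pow_two_pos_of_ne_zero h (a := m.2)
      nlinarith [sq_nonneg m.1]
  exact_mod_cast h2

lemma nsq_pos {m : ℤ × ℤ} (hm : m ≠ 0) : 0 < nsq m := lt_of_lt_of_le one_pos (one_le_nsq hm)

lemma two_le_nsq {m : ℤ × ℤ} (hm : m ≠ 0) (h1 : nsq m ≠ 1) : 2 ≤ nsq m := by
  have := one_le_nsq hm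
  rw [nsq_eq_intCast] at *
  have h2 : (1 : ℤ) ≤ m.1 ^ 2 + m.2 ^ 2 := by exact_mod_cast this
  have h3 : (m.1 ^ 2 + m.2 ^ 2 : ℤ) ≠ 1 := by
    intro h; apply h1; rw [h]; norm_num
  have : (2 : ℤ) ≤ m.1 ^ 2 + m.2 ^ 2 := by omega
  exact_mod_cast this

lemma nsq_add_le (m k : ℤ × ℤ) : nsq (m + k) ≤ 2 * nsq m + 2 * nsq k := by
  unfold nsq
  simp only [Prod.fst_add, Prod.snd_add]
  push_cast
  nlinarith [sq_nonneg ((m.1 : ℝ) - k.1), sq_nonneg ((m.2 : ℝ) - k.2)]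

lemma nsq_cs (m k : ℤ × ℤ) : (nsq m - nsq k) ^ 2 ≤ nsq (m + k) * nsq (m - k) := by
  unfold nsq
  simp only [Prod.fst_add, Prod.snd_add, Prod.fst_sub, Prod.snd_sub]
  push_cast
  nlinarith [sq_nonneg (((m.1 : ℝ) + k.1) * ((m.2 : ℝ) - k.2) - ((m.2 : ℝ) + k.2) * ((m.1 : ℝ) - k.1))]

lemma nsq_half_le (m k : ℤ × ℤ) (h : 16 * nsq k ≤ nsq m) : nsq m / 2 ≤ nsq (m + k) := by
  unfold nsq at *
  simp only [Prod.fst_add, Prod.snd_add]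
  push_cast
  nlinarith [sq_nonneg ((m.1 : ℝ) * k.2 - (m.2 : ℝ) * k.1),
    sq_nonneg (4 * ((m.1 : ℝ) * k.1 + (m.2 : ℝ) * k.2) + ((m.1 : ℝ) ^ 2 + (m.2 : ℝ) ^ 2)),
    sq_nonneg ((m.1 : ℝ) + k.1), sq_nonneg ((m.2 : ℝ) + k.2)]

open Real

lemma summable_g {b : ℝ} (hb : 1 < b) :
    Summable (fun n : ℤ => ((1 : ℝ) + (n : ℝ) ^ 2) ^ (-(b / 2))) := by
  have hmaj : Summable (fun n : ℤ => |(n : ℝ)| ^ (-b) + (if n = 0 then (1 : ℝ) else 0)) := by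
    apply (summable_abs_int_rpow hb).add
    apply summable_of_ne_finset_zero (s := {0})
    intro n hn
    simp at hn
    simp [hn]
  apply Summable.of_nonneg_of_le (fun n => by positivity) _ hmaj
  intro n
  by_cases hn : n = 0
  · simp only [hn]
    norm_num
    exact Real.rpow_nonneg le_rfl _
  · have h1 : (1 : ℝ) ≤ |(n : ℝ)| := by
      have : (1 : ℤ) ≤ |n| := Int.one_le_abs hn
      calc (1:ℝ) ≤ ((|n| : ℤ) : ℝ) := by exact_mod_cast this
        _ = |(n : ℝ)| := by push_cast; ring
    have h2 : |(n : ℝ)| ^ 2 ≤ 1 + (n : ℝ) ^ 2 := by nlinarith [sq_abs (n : ℝ)]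
    have h3 : ((1 : ℝ) + (n : ℝ) ^ 2) ^ (-(b / 2)) ≤ (|(n : ℝ)| ^ 2) ^ (-(b / 2)) := by
      apply Real.rpow_le_rpow_of_nonpos (by positivity) h2 (by linarith)
    calc ((1 : ℝ) + (n : ℝ) ^ 2) ^ (-(b / 2)) ≤ (|(n : ℝ)| ^ 2) ^ (-(b / 2)) := h3
      _ = |(n : ℝ)| ^ ((2 : ℝ) * (-(b / 2))) := by
          rw [← Real.rpow_natCast |(n : ℝ)| 2, ← Real.rpow_mul (abs_nonneg _)]
          norm_num
      _ = |(n : ℝ)| ^ (-b) := by ring_nf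
      _ ≤ |(n : ℝ)| ^ (-b) + (if n = 0 then (1:ℝ) else 0) := by simp [hn]

lemma summable_nsq_rpow {b : ℝ} (hb : 1 < b) :
    Summable (fun k : ℤ × ℤ => if k ≠ 0 then (nsq k) ^ (-b) else 0) := by
  have hg := summable_g hb
  have hprod : Summable (fun k : ℤ × ℤ =>
      ((1 : ℝ) + (k.1 : ℝ) ^ 2) ^ (-(b / 2)) * ((1 : ℝ) + (k.2 : ℝ) ^ 2) ^ (-(b / 2))) :=
    hg.mul_of_nonneg hg (fun n => by positivity) (fun n => by positivity)
  apply Summable.of_nonneg_of_le _ _ (hprod.mul_left ((2:ℝ) ^ b))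
  · intro k
    by_cases hk : k = 0 <;> simp only [hk, ne_eq, not_true_eq_false, if_false,
      not_false_eq_true, if_true, le_refl]
    exact Real.rpow_nonneg (nsq_nonneg k) _
  · intro k
    by_cases hk : k = 0
    · simp only [hk, ne_eq, not_true_eq_false, if_false]
      positivity
    · simp only [ne_eq, hk, not_false_eq_true, if_true]
      set u : ℝ := ((1 : ℝ) + (k.1 : ℝ) ^ 2) * ((1 : ℝ) + (k.2 : ℝ) ^ 2) with hu
      have hupos : 0 < u := by positivity
      have h1 : 1 ≤ nsq k := one_le_nsq hk
      have h4 : u ≤ (2 * nsq k) ^ 2 := by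
        unfold nsq at *
        nlinarith [sq_nonneg ((k.1:ℝ)^2 - (k.2:ℝ)^2), sq_nonneg ((k.1:ℝ)*(k.2:ℝ))]
      have hsq : Real.sqrt u ≤ 2 * nsq k := by
        rw [show (2 * nsq k) = Real.sqrt ((2 * nsq k)^2) by rw [Real.sqrt_sq (by positivity)]]
        exact Real.sqrt_le_sqrt h4
      have hsqpos : 0 < Real.sqrt u := Real.sqrt_pos.mpr hupos
      have h5 : nsq k ^ (-b) ≤ (Real.sqrt u / 2) ^ (-b) := by
        apply Real.rpow_le_rpow_of_nonpos (by positivity) (by linarith) (by linarith)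
      calc nsq k ^ (-b) ≤ (Real.sqrt u / 2) ^ (-b) := h5
        _ = (Real.sqrt u) ^ (-b) / (2:ℝ) ^ (-b) :=
            Real.div_rpow (Real.sqrt_nonneg _) (by norm_num : (0:ℝ) ≤ 2) (-b)
        _ = (2:ℝ) ^ b * (Real.sqrt u) ^ (-b) := by
            have h2b : (0:ℝ) < 2 ^ b := Real.rpow_pos_of_pos two_pos b
            rw [Real.rpow_neg (by norm_num : (0:ℝ) ≤ 2)]
            field_simp
        _ = (2:ℝ) ^ b * (((1 : ℝ) + (k.1 : ℝ) ^ 2) ^ (-(b/2)) * ((1 : ℝ) + (k.2 : ℝ) ^ 2) ^ (-(b/2))) := by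
            congr 1
            have h6 : (Real.sqrt u) ^ (-b) = u ^ (-(b / 2)) := by
              rw [Real.sqrt_eq_rpow, ← Real.rpow_mul hupos.le]
              ring_nf
            rw [h6, hu, Real.mul_rpow (by positivity) (by positivity)]

lemma nsq_sub_le (m k : ℤ × ℤ) : nsq (m - k) ≤ 2 * nsq m + 2 * nsq k := by
  unfold nsq
  simp only [Prod.fst_sub, Prod.snd_sub]
  push_cast
  nlinarith [sq_nonneg ((m.1 : ℝ) + k.1), sq_nonneg ((m.2 : ℝ) + k.2)]

/-- The upper-bound constant. -/
noncomputable def Dc (α : ℝ) : ℝ := max (3 * 2 ^ α) (34 * 16 ^ (α - 1))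

lemma Dc_pos (α : ℝ) : 0 < Dc α :=
  lt_of_lt_of_le (by positivity) (le_max_left _ _)

/-- Key pointwise upper bound. -/
lemma key_real {α : ℝ} (hα : 1 < α) {m k : ℤ × ℤ} (hm : m ≠ 0) (hk : k ≠ 0)
    (hmk : m + k ≠ 0) :
    (nsq k) ^ (-α) * ((nsq (m + k)) ^ (-(α + 1)) * (1 - nsq k / nsq m) ^ 2)
      ≤ Dc α * (nsq m) ^ (-(α + 1)) * ((nsq k) ^ (-α) + (nsq (m + k)) ^ (-α)) := by
  set nm := nsq m with hnm
  set nk := nsq k with hnk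
  set ns := nsq (m + k) with hns
  have hnm1 : 1 ≤ nm := one_le_nsq hm
  have hnk1 : 1 ≤ nk := one_le_nsq hk
  have hns1 : 1 ≤ ns := one_le_nsq hmk
  have hnmp : 0 < nm := by linarith
  have hnkp : 0 < nk := by linarith
  have hnsp : 0 < ns := by linarith
  -- positivity of rpow values
  have pk : 0 < nk ^ (-α) := Real.rpow_pos_of_pos hnkp _
  have ps : 0 < ns ^ (-α) := Real.rpow_pos_of_pos hnsp _
  have pm : 0 < nm ^ (-(α + 1)) := Real.rpow_pos_of_pos hnmp _
  have ps1 : 0 < ns ^ (-(α + 1)) := Real.rpow_pos_of_pos hnsp _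
  -- step 1 : main reduction
  have e1 : (1 - nk / nm) ^ 2 = (nm - nk) ^ 2 / nm ^ 2 := by
    field_simp
  have hcs : (nm - nk) ^ 2 ≤ ns * (2 * nm + 2 * nk) :=
    le_trans (nsq_cs m k) (mul_le_mul_of_nonneg_left (nsq_sub_le m k) (nsq_nonneg _))
  have ens : ns ^ (-(α + 1)) * ns = ns ^ (-α) := by
    rw [← Real.rpow_add_one (ne_of_gt hnsp)]
    ring_nf
  have hmain : nk ^ (-α) * (ns ^ (-(α + 1)) * (1 - nk / nm) ^ 2)
      ≤ nk ^ (-α) * ns ^ (-α) * (2 * nm + 2 * nk) / nm ^ 2 := by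
    rw [e1]
    calc nk ^ (-α) * (ns ^ (-(α + 1)) * ((nm - nk) ^ 2 / nm ^ 2))
        ≤ nk ^ (-α) * (ns ^ (-(α + 1)) * ((ns * (2 * nm + 2 * nk)) / nm ^ 2)) := by
          gcongr
      _ = nk ^ (-α) * (ns ^ (-(α + 1)) * ns) * (2 * nm + 2 * nk) / nm ^ 2 := by ring
      _ = nk ^ (-α) * ns ^ (-α) * (2 * nm + 2 * nk) / nm ^ 2 := by rw [ens]
  have hD1 : 3 * 2 ^ α ≤ Dc α := le_max_left _ _
  have hD2 : 34 * 16 ^ (α - 1) ≤ Dc α := le_max_right _ _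
  refine le_trans hmain ?_
  by_cases h16 : 16 * nk ≤ nm
  · -- region 1
    have hhalf : nm / 2 ≤ ns := nsq_half_le m k h16
    have hs2 : ns ^ (-α) ≤ 2 ^ α * nm ^ (-α) := by
      have h1 : ns ^ (-α) ≤ (nm / 2) ^ (-α) :=
        Real.rpow_le_rpow_of_nonpos (by positivity) hhalf (by linarith)
      have h2 : (nm / 2) ^ (-α) = 2 ^ α * nm ^ (-α) := by
        rw [Real.div_rpow hnmp.le (by norm_num : (0:ℝ) ≤ 2)]
        rw [Real.rpow_neg (by norm_num : (0:ℝ) ≤ 2)]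
        have : (0:ℝ) < 2 ^ α := Real.rpow_pos_of_pos two_pos α
        field_simp
      linarith
    have hid : nm ^ (-α) * nm / nm ^ 2 = nm ^ (-(α + 1)) := by
      have h3 : nm ^ (-(α + 1)) = nm ^ (-α) / nm := by
        rw [show -(α + 1) = -α - 1 by ring, Real.rpow_sub hnmp, Real.rpow_one]
      rw [h3]
      field_simp
    calc nk ^ (-α) * ns ^ (-α) * (2 * nm + 2 * nk) / nm ^ 2
        ≤ nk ^ (-α) * (2 ^ α * nm ^ (-α)) * (3 * nm) / nm ^ 2 := by
          gcongr
          linarith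
      _ = 3 * 2 ^ α * nk ^ (-α) * (nm ^ (-α) * nm / nm ^ 2) := by ring
      _ = 3 * 2 ^ α * nk ^ (-α) * nm ^ (-(α + 1)) := by rw [hid]
      _ ≤ Dc α * nm ^ (-(α + 1)) * (nk ^ (-α) + ns ^ (-α)) := by
          nlinarith [mul_nonneg (sub_nonneg.mpr hD1) (mul_pos pk pm).le,
            mul_nonneg (mul_pos (Dc_pos α) pm).le ps.le]
  · -- region 2
    push_neg at h16
    have enk : nk ^ (-α) * nk = nk ^ (1 - α) := by
      rw [show (1 - α) = -α + 1 by ring, Real.rpow_add_one (ne_of_gt hnkp)]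
    have hk2 : nk ^ (1 - α) ≤ 16 ^ (α - 1) * nm ^ (1 - α) := by
      have h1 : nk ^ (1 - α) ≤ (nm / 16) ^ (1 - α) := by
        apply Real.rpow_le_rpow_of_nonpos (by positivity) (by linarith) (by linarith)
      have h2 : (nm / 16) ^ (1 - α) = 16 ^ (α - 1) * nm ^ (1 - α) := by
        rw [Real.div_rpow hnmp.le (by norm_num : (0:ℝ) ≤ 16)]
        rw [show (1 - α) = -(α - 1) by ring, Real.rpow_neg (by norm_num : (0:ℝ) ≤ 16)]
        have : (0:ℝ) < 16 ^ (α - 1) := Real.rpow_pos_of_pos (by norm_num) _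
        field_simp
      linarith
    have hid2 : nm ^ (1 - α) / nm ^ 2 = nm ^ (-(α + 1)) := by
      have h2R : nm ^ ((2:ℕ):ℝ) = nm ^ (2:ℕ) := Real.rpow_natCast nm 2
      rw [show (nm ^ 2) = nm ^ ((2:ℕ):ℝ) by rw [h2R], ← Real.rpow_sub hnmp]
      norm_num
      congr 1
      ring
    have pk1 : 0 < nk ^ (1 - α) := Real.rpow_pos_of_pos hnkp _
    calc nk ^ (-α) * ns ^ (-α) * (2 * nm + 2 * nk) / nm ^ 2
        ≤ nk ^ (-α) * ns ^ (-α) * (34 * nk) / nm ^ 2 := by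
          gcongr
          linarith
      _ = 34 * ns ^ (-α) * (nk ^ (-α) * nk) / nm ^ 2 := by ring
      _ = 34 * ns ^ (-α) * nk ^ (1 - α) / nm ^ 2 := by rw [enk]
      _ ≤ 34 * ns ^ (-α) * (16 ^ (α - 1) * nm ^ (1 - α)) / nm ^ 2 := by
          gcongr
      _ = 34 * 16 ^ (α - 1) * ns ^ (-α) * (nm ^ (1 - α) / nm ^ 2) := by ring
      _ = 34 * 16 ^ (α - 1) * ns ^ (-α) * nm ^ (-(α + 1)) := by rw [hid2]
      _ ≤ Dc α * nm ^ (-(α + 1)) * (nk ^ (-α) + ns ^ (-α)) := by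
          nlinarith [mul_nonneg (sub_nonneg.mpr hD2) (mul_pos ps pm).le,
            mul_nonneg (mul_pos (Dc_pos α) pm).le pk.le]

/-- The lower-bound constant. -/
noncomputable def cc (α : ℝ) : ℝ := min ((3:ℝ) ^ (-(α + 1)) / 4) (9 * 4 ^ (-α) * 10 ^ (-(α + 1)))

lemma cc_pos (α : ℝ) : 0 < cc α := by
  apply lt_min <;> positivity

lemma lower_real {α : ℝ} (hα : 1 < α) {m : ℤ × ℤ} (hm : m ≠ 0) :
    ∃ k0 : ℤ × ℤ, k0 ≠ 0 ∧ m + k0 ≠ 0 ∧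
      cc α * (nsq m) ^ (-(α + 1))
        ≤ (nsq k0) ^ (-α) * ((nsq (m + k0)) ^ (-(α + 1)) * (1 - nsq k0 / nsq m) ^ 2) := by
  have hnm1 : 1 ≤ nsq m := one_le_nsq hm
  by_cases h1 : nsq m = 1
  · -- use k0 = (2, 0)
    refine ⟨(2, 0), by simp [Prod.ext_iff], ?_, ?_⟩
    · intro h
      have hmeq : m = -(2, 0) := by
        have := eq_neg_of_add_eq_zero_left h
        exact this
      rw [hmeq] at h1
      norm_num [nsq] at h1
    · have hk0 : nsq (2, 0) = 4 := by norm_num [nsq]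
      have hup : nsq (m + (2, 0)) ≤ 10 := by
        have := nsq_add_le m (2, 0)
        rw [hk0, h1] at this
        linarith
      have hposmk : 0 < nsq (m + (2, 0)) := by
        apply nsq_pos
        intro h
        have hmeq : m = -(2, 0) := eq_neg_of_add_eq_zero_left h
        rw [hmeq] at h1
        norm_num [nsq] at h1
      have hlow : (10:ℝ) ^ (-(α + 1)) ≤ (nsq (m + (2, 0))) ^ (-(α + 1)) :=
        Real.rpow_le_rpow_of_nonpos hposmk hup (by linarith)
      rw [hk0, h1]
      have e9 : (1 - (4:ℝ) / 1) ^ 2 = 9 := by norm_num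
      rw [e9]
      rw [Real.one_rpow]
      have p4 : (0:ℝ) < 4 ^ (-α) := by positivity
      calc cc α * 1 ≤ 9 * 4 ^ (-α) * 10 ^ (-(α + 1)) := by
            rw [mul_one]; exact min_le_right _ _
        _ ≤ 4 ^ (-α) * ((nsq (m + (2, 0))) ^ (-(α + 1)) * 9) := by nlinarith
  · -- use k0 = (1, 0)
    have h2 : 2 ≤ nsq m := two_le_nsq hm h1
    refine ⟨(1, 0), by simp [Prod.ext_iff], ?_, ?_⟩
    · intro h
      have hmeq : m = -(1, 0) := eq_neg_of_add_eq_zero_left h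
      rw [hmeq] at h1
      norm_num [nsq] at h1
    · have hk0 : nsq (1, 0) = 1 := by norm_num [nsq]
      have hup : nsq (m + (1, 0)) ≤ 3 * nsq m := by
        have := nsq_add_le m (1, 0)
        rw [hk0] at this
        linarith
      have hposmk : 0 < nsq (m + (1, 0)) := by
        apply nsq_pos
        intro h
        have hmeq : m = -(1, 0) := eq_neg_of_add_eq_zero_left h
        rw [hmeq] at h1
        norm_num [nsq] at h1
      have hnmp : (0:ℝ) < nsq m := by linarith
      have hlow : (3 * nsq m) ^ (-(α + 1)) ≤ (nsq (m + (1, 0))) ^ (-(α + 1)) :=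
        Real.rpow_le_rpow_of_nonpos hposmk hup (by linarith)
      have e3 : (3 * nsq m) ^ (-(α + 1)) = 3 ^ (-(α + 1)) * (nsq m) ^ (-(α + 1)) :=
        Real.mul_rpow (by norm_num) (nsq_nonneg m)
      have h3 : 1 / nsq m ≤ 1 / 2 := by
        rw [div_le_div_iff₀ hnmp (by norm_num : (0:ℝ) < 2)]
        linarith
      have hq2 : (1/4 : ℝ) ≤ (1 - 1 / nsq m) ^ 2 := by nlinarith
      rw [hk0, Real.one_rpow, one_mul]
      have p3 : (0:ℝ) < 3 ^ (-(α + 1)) := by positivity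
      have pnm : (0:ℝ) < (nsq m) ^ (-(α + 1)) := Real.rpow_pos_of_pos hnmp _
      have hA : (0:ℝ) < (nsq (m + (1, 0))) ^ (-(α + 1)) := Real.rpow_pos_of_pos hposmk _
      have h5 : 3 ^ (-(α + 1)) * (nsq m) ^ (-(α + 1)) ≤ (nsq (m + (1, 0))) ^ (-(α + 1)) := by
        rw [← e3]; exact hlow
      calc cc α * (nsq m) ^ (-(α + 1)) ≤ (3 ^ (-(α + 1)) / 4) * (nsq m) ^ (-(α + 1)) :=
            mul_le_mul_of_nonneg_right (min_le_left _ _) pnm.le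
        _ ≤ (nsq (m + (1, 0))) ^ (-(α + 1)) * (1 - 1 / nsq m) ^ 2 := by
            have := mul_le_mul h5 hq2 (by norm_num) hA.le
            linarith

noncomputable def gfun (α : ℝ) (m k : ℤ × ℤ) : ℝ≥0∞ :=
  if k ≠ 0 ∧ m + k ≠ 0 then
    ENNReal.ofReal ((nsq k) ^ (-α)) *
      ENNReal.ofReal ((nsq (m + k)) ^ (-(α + 1)) * (1 - nsq k / nsq m) ^ 2)
  else 0

/-- The real total mass of the weight function. -/
noncomputable def Sg (α : ℝ) : ℝ := ∑' k : ℤ × ℤ, if k ≠ 0 then (nsq k) ^ (-α) else 0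

lemma Sg_nonneg (α : ℝ) : 0 ≤ Sg α := by
  apply tsum_nonneg
  intro k
  split
  · exact Real.rpow_nonneg (nsq_nonneg _) _
  · exact le_rfl

lemma tsum_weight (α : ℝ) (hα : 1 < α) :
    (∑' k : ℤ × ℤ, if k ≠ 0 then ENNReal.ofReal ((nsq k) ^ (-α)) else 0)
      = ENNReal.ofReal (Sg α) := by
  have nn : ∀ k : ℤ × ℤ, 0 ≤ (if k ≠ 0 then (nsq k) ^ (-α) else 0) := by
    intro k
    split
    · exact Real.rpow_nonneg (nsq_nonneg _) _
    · exact le_rfl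
  rw [Sg, ENNReal.ofReal_tsum_of_nonneg nn (summable_nsq_rpow hα)]
  refine tsum_congr fun k => ?_
  split <;> simp

lemma S_rewrite (α : ℝ) (a : ℤ × ℤ → ℂ) :
    (∑' k : ℤ × ℤ,
        (if k ≠ 0 then
          ENNReal.ofReal ((nsq k) ^ (-α)) *
            ∑' ℓ : ℤ × ℤ,
              (if ℓ ≠ 0 ∧ ℓ ≠ k then
                ENNReal.ofReal
                  ((nsq ℓ) ^ (-(α + 1)) * (1 - nsq k / nsq (ℓ - k)) ^ 2 * ‖a (ℓ - k)‖ ^ 2)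
              else 0)
        else 0))
    = ∑' m : ℤ × ℤ, (if m ≠ 0 then ENNReal.ofReal (‖a m‖ ^ 2) else 0) * ∑' k, gfun α m k := by
  have step1 : ∀ k : ℤ × ℤ,
      (if k ≠ 0 then
        ENNReal.ofReal ((nsq k) ^ (-α)) *
          ∑' ℓ : ℤ × ℤ,
            (if ℓ ≠ 0 ∧ ℓ ≠ k then
              ENNReal.ofReal
                ((nsq ℓ) ^ (-(α + 1)) * (1 - nsq k / nsq (ℓ - k)) ^ 2 * ‖a (ℓ - k)‖ ^ 2)
            else 0)
      else 0)
      = ∑' ℓ : ℤ × ℤ, (if k ≠ 0 then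
          ENNReal.ofReal ((nsq k) ^ (-α)) *
            (if ℓ ≠ 0 ∧ ℓ ≠ k then
              ENNReal.ofReal
                ((nsq ℓ) ^ (-(α + 1)) * (1 - nsq k / nsq (ℓ - k)) ^ 2 * ‖a (ℓ - k)‖ ^ 2)
            else 0)
        else 0) := by
    intro k
    by_cases hk : k = 0
    · simp [hk]
    · simp only [hk, ne_eq, not_false_eq_true, if_true]
      exact ENNReal.tsum_mul_left.symm
  calc (∑' k : ℤ × ℤ, _) = ∑' (k : ℤ × ℤ) (ℓ : ℤ × ℤ), (if k ≠ 0 then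
          ENNReal.ofReal ((nsq k) ^ (-α)) *
            (if ℓ ≠ 0 ∧ ℓ ≠ k then
              ENNReal.ofReal
                ((nsq ℓ) ^ (-(α + 1)) * (1 - nsq k / nsq (ℓ - k)) ^ 2 * ‖a (ℓ - k)‖ ^ 2)
            else 0)
        else 0) := tsum_congr step1
    _ = ∑' (k : ℤ × ℤ) (m : ℤ × ℤ), (if k ≠ 0 then
          ENNReal.ofReal ((nsq k) ^ (-α)) *
            (if m + k ≠ 0 ∧ m + k ≠ k then
              ENNReal.ofReal
                ((nsq (m + k)) ^ (-(α + 1)) * (1 - nsq k / nsq ((m + k) - k)) ^ 2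
                  * ‖a ((m + k) - k)‖ ^ 2)
            else 0)
        else 0) := by
      refine tsum_congr fun k => ?_
      have := Equiv.tsum_eq (Equiv.addRight k) (fun ℓ : ℤ × ℤ => (if k ≠ 0 then
          ENNReal.ofReal ((nsq k) ^ (-α)) *
            (if ℓ ≠ 0 ∧ ℓ ≠ k then
              ENNReal.ofReal
                ((nsq ℓ) ^ (-(α + 1)) * (1 - nsq k / nsq (ℓ - k)) ^ 2 * ‖a (ℓ - k)‖ ^ 2)
            else 0)
        else 0))
      simp only [Equiv.coe_addRight] at this
      exact this.symm
    _ = ∑' (m : ℤ × ℤ) (k : ℤ × ℤ), (if k ≠ 0 then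
          ENNReal.ofReal ((nsq k) ^ (-α)) *
            (if m + k ≠ 0 ∧ m + k ≠ k then
              ENNReal.ofReal
                ((nsq (m + k)) ^ (-(α + 1)) * (1 - nsq k / nsq ((m + k) - k)) ^ 2
                  * ‖a ((m + k) - k)‖ ^ 2)
            else 0)
        else 0) := ENNReal.tsum_comm
    _ = ∑' m : ℤ × ℤ, (if m ≠ 0 then ENNReal.ofReal (‖a m‖ ^ 2) else 0) * ∑' k, gfun α m k := by
      refine tsum_congr fun m => ?_
      rw [← ENNReal.tsum_mul_left]
      refine tsum_congr fun k => ?_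
      simp only [add_sub_cancel_right]
      by_cases hm : m = 0
      · simp [hm, gfun]
      by_cases hk : k = 0
      · simp [hk, gfun]
      by_cases hmk : m + k = 0
      · simp [hm, hk, hmk, gfun]
      · have hmkk : m + k ≠ k := by
          intro h
          exact hm (by simpa using h)
        rw [if_pos hk, if_pos ⟨hmk, hmkk⟩, if_pos hm]
        unfold gfun
        rw [if_pos ⟨hk, hmk⟩]
        have hX : (0:ℝ) ≤ (nsq (m + k)) ^ (-(α + 1)) * (1 - nsq k / nsq m) ^ 2 :=
          mul_nonneg (Real.rpow_nonneg (nsq_nonneg _) _) (sq_nonneg _)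
        rw [show (nsq (m + k)) ^ (-(α + 1)) * (1 - nsq k / nsq m) ^ 2 * ‖a m‖ ^ 2
            = ((nsq (m + k)) ^ (-(α + 1)) * (1 - nsq k / nsq m) ^ 2) * ‖a m‖ ^ 2 from rfl,
          ENNReal.ofReal_mul hX]
        ring

lemma T_rewrite (α : ℝ) (a : ℤ × ℤ → ℂ) :
    (∑' m : ℤ × ℤ, if m ≠ 0 then ENNReal.ofReal ((nsq m) ^ (-(α + 1)) * ‖a m‖ ^ 2) else 0)
      = ∑' m : ℤ × ℤ, (if m ≠ 0 then ENNReal.ofReal (‖a m‖ ^ 2) else 0)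
          * ENNReal.ofReal ((nsq m) ^ (-(α + 1))) := by
  refine tsum_congr fun m => ?_
  by_cases hm : m = 0
  · simp [hm]
  · rw [if_pos hm, if_pos hm, ENNReal.ofReal_mul (Real.rpow_nonneg (nsq_nonneg _) _)]
    ring

lemma V_lower {α : ℝ} (hα : 1 < α) {m : ℤ × ℤ} (hm : m ≠ 0) :
    ENNReal.ofReal (cc α) * ENNReal.ofReal ((nsq m) ^ (-(α + 1))) ≤ ∑' k, gfun α m k := by
  obtain ⟨k0, hk0, hmk0, hineq⟩ := lower_real hα hm
  refine le_trans ?_ (ENNReal.le_tsum k0)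
  unfold gfun
  rw [if_pos ⟨hk0, hmk0⟩, ← ENNReal.ofReal_mul (Real.rpow_nonneg (nsq_nonneg _) _),
    ← ENNReal.ofReal_mul (cc_pos α).le]
  exact ENNReal.ofReal_le_ofReal hineq

lemma V_upper {α : ℝ} (hα : 1 < α) {m : ℤ × ℤ} (hm : m ≠ 0) :
    ∑' k, gfun α m k
      ≤ ENNReal.ofReal (2 * Dc α * Sg α) * ENNReal.ofReal ((nsq m) ^ (-(α + 1))) := by
  have pointwise : ∀ k : ℤ × ℤ, gfun α m k
      ≤ ENNReal.ofReal (Dc α * (nsq m) ^ (-(α + 1))) *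
          ((if k ≠ 0 then ENNReal.ofReal ((nsq k) ^ (-α)) else 0)
            + (if m + k ≠ 0 then ENNReal.ofReal ((nsq (m + k)) ^ (-α)) else 0)) := by
    intro k
    unfold gfun
    split
    · rename_i hcond
      obtain ⟨hk, hmk⟩ := hcond
      rw [← ENNReal.ofReal_mul (Real.rpow_nonneg (nsq_nonneg _) _)]
      rw [if_pos hk, if_pos hmk]
      calc ENNReal.ofReal ((nsq k) ^ (-α) *
              ((nsq (m + k)) ^ (-(α + 1)) * (1 - nsq k / nsq m) ^ 2))
          ≤ ENNReal.ofReal (Dc α * (nsq m) ^ (-(α + 1))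
              * ((nsq k) ^ (-α) + (nsq (m + k)) ^ (-α))) :=
            ENNReal.ofReal_le_ofReal (key_real hα hm hk hmk)
        _ = ENNReal.ofReal (Dc α * (nsq m) ^ (-(α + 1)))
              * (ENNReal.ofReal ((nsq k) ^ (-α)) + ENNReal.ofReal ((nsq (m + k)) ^ (-α))) := by
            rw [ENNReal.ofReal_mul
              (mul_nonneg (Dc_pos α).le (Real.rpow_nonneg (nsq_nonneg _) _))]
            congr 1
            rw [ENNReal.ofReal_add (Real.rpow_nonneg (nsq_nonneg _) _)
              (Real.rpow_nonneg (nsq_nonneg _) _)]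
    · simp
  calc ∑' k, gfun α m k
      ≤ ∑' k : ℤ × ℤ, ENNReal.ofReal (Dc α * (nsq m) ^ (-(α + 1))) *
          ((if k ≠ 0 then ENNReal.ofReal ((nsq k) ^ (-α)) else 0)
            + (if m + k ≠ 0 then ENNReal.ofReal ((nsq (m + k)) ^ (-α)) else 0)) :=
        ENNReal.tsum_le_tsum pointwise
    _ = ENNReal.ofReal (Dc α * (nsq m) ^ (-(α + 1))) *
          ((∑' k : ℤ × ℤ, (if k ≠ 0 then ENNReal.ofReal ((nsq k) ^ (-α)) else 0))
            + ∑' k : ℤ × ℤ, (if m + k ≠ 0 then ENNReal.ofReal ((nsq (m + k)) ^ (-α)) else 0)) := by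
        rw [ENNReal.tsum_mul_left, ENNReal.tsum_add]
    _ = ENNReal.ofReal (Dc α * (nsq m) ^ (-(α + 1))) *
          (ENNReal.ofReal (Sg α) + ENNReal.ofReal (Sg α)) := by
        rw [tsum_weight α hα]
        congr 2
        have := Equiv.tsum_eq (Equiv.addLeft m)
          (fun j : ℤ × ℤ => if j ≠ 0 then ENNReal.ofReal ((nsq j) ^ (-α)) else 0)
        simp only [Equiv.coe_addLeft] at this
        exact this.trans (tsum_weight α hα)
    _ = ENNReal.ofReal (2 * Dc α * Sg α) * ENNReal.ofReal ((nsq m) ^ (-(α + 1))) := by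
        rw [ENNReal.ofReal_mul (mul_nonneg (by norm_num : (0:ℝ) ≤ 2) (Dc_pos α).le),
          ENNReal.ofReal_mul (by norm_num : (0:ℝ) ≤ 2),
          ENNReal.ofReal_mul (Dc_pos α).le,
          ← ENNReal.ofReal_add (Sg_nonneg α) (Sg_nonneg α),
          show Sg α + Sg α = 2 * Sg α by ring,
          ENNReal.ofReal_mul (by norm_num : (0:ℝ) ≤ 2)]
        ring

/-- Norm equivalence with the linearised Navier–Stokes cancellation (Lemma 5.5): for `α > 1`
there are `c, C > 0` such that for all Fourier data `a : ℤ² → ℂ` with `a 0 = 0`, with all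
sums valued in `[0,∞]`,
`c ∑_{m≠0} |m|^{−2(α+1)}|a m|² ≤
   ∑_{k≠0} |k|^{−2α} ∑_{ℓ≠0, ℓ≠k} |ℓ|^{−2(α+1)} (1 − |k|²/|ℓ−k|²)² |a(ℓ−k)|²
  ≤ C ∑_{m≠0} |m|^{−2(α+1)}|a m|²`. -/
theorem norm_equivalence_linearised_NS (α : ℝ) (hα : 1 < α) :
    ∃ c C : ℝ, 0 < c ∧ 0 < C ∧ ∀ a : ℤ × ℤ → ℂ, a 0 = 0 →
      (ENNReal.ofReal c *
          (∑' m : ℤ × ℤ, if m ≠ 0 then ENNReal.ofReal ((nsq m) ^ (-(α + 1)) * ‖a m‖ ^ 2) else 0) ≤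
        ∑' k : ℤ × ℤ,
          (if k ≠ 0 then
            ENNReal.ofReal ((nsq k) ^ (-α)) *
              ∑' ℓ : ℤ × ℤ,
                (if ℓ ≠ 0 ∧ ℓ ≠ k then
                  ENNReal.ofReal
                    ((nsq ℓ) ^ (-(α + 1)) * (1 - nsq k / nsq (ℓ - k)) ^ 2 * ‖a (ℓ - k)‖ ^ 2)
                else 0)
          else 0)) ∧
      ((∑' k : ℤ × ℤ,
          (if k ≠ 0 then
            ENNReal.ofReal ((nsq k) ^ (-α)) *
              ∑' ℓ : ℤ × ℤ,
                (if ℓ ≠ 0 ∧ ℓ ≠ k then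
                  ENNReal.ofReal
                    ((nsq ℓ) ^ (-(α + 1)) * (1 - nsq k / nsq (ℓ - k)) ^ 2 * ‖a (ℓ - k)‖ ^ 2)
                else 0)
          else 0)) ≤
        ENNReal.ofReal C *
          ∑' m : ℤ × ℤ, if m ≠ 0 then ENNReal.ofReal ((nsq m) ^ (-(α + 1)) * ‖a m‖ ^ 2) else 0) := by
  have hCpos : (0:ℝ) < 2 * Dc α * Sg α + 1 := by
    have h1 := mul_nonneg (mul_nonneg (by norm_num : (0:ℝ) ≤ 2) (Dc_pos α).le) (Sg_nonneg α)
    linarith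
  refine ⟨cc α, 2 * Dc α * Sg α + 1, cc_pos α, hCpos, ?_⟩
  intro a _
  constructor
  · rw [S_rewrite α a, T_rewrite α a, ← ENNReal.tsum_mul_left]
    apply ENNReal.tsum_le_tsum
    intro m
    by_cases hm : m = 0
    · simp [hm]
    · rw [show ENNReal.ofReal (cc α) *
          ((if m ≠ 0 then ENNReal.ofReal (‖a m‖ ^ 2) else 0)
            * ENNReal.ofReal ((nsq m) ^ (-(α + 1))))
        = (if m ≠ 0 then ENNReal.ofReal (‖a m‖ ^ 2) else 0)
            * (ENNReal.ofReal (cc α) * ENNReal.ofReal ((nsq m) ^ (-(α + 1)))) by ring]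
      exact mul_le_mul_right (V_lower hα hm) _
  · rw [S_rewrite α a, T_rewrite α a, ← ENNReal.tsum_mul_left]
    apply ENNReal.tsum_le_tsum
    intro m
    by_cases hm : m = 0
    · simp [hm]
    · have h2 : ENNReal.ofReal (2 * Dc α * Sg α) ≤ ENNReal.ofReal (2 * Dc α * Sg α + 1) :=
        ENNReal.ofReal_le_ofReal (by linarith)
      calc (if m ≠ 0 then ENNReal.ofReal (‖a m‖ ^ 2) else 0) * ∑' k, gfun α m k
          ≤ (if m ≠ 0 then ENNReal.ofReal (‖a m‖ ^ 2) else 0)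
              * (ENNReal.ofReal (2 * Dc α * Sg α) * ENNReal.ofReal ((nsq m) ^ (-(α + 1)))) :=
            mul_le_mul_right (V_upper hα hm) _
        _ = ENNReal.ofReal (2 * Dc α * Sg α) *
              ((if m ≠ 0 then ENNReal.ofReal (‖a m‖ ^ 2) else 0)
                * ENNReal.ofReal ((nsq m) ^ (-(α + 1)))) := by ring
        _ ≤ ENNReal.ofReal (2 * Dc α * Sg α + 1) *
              ((if m ≠ 0 then ENNReal.ofReal (‖a m‖ ^ 2) else 0)
                * ENNReal.ofReal ((nsq m) ^ (-(α + 1)))) := mul_le_mul_left h2 _
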